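/- Let τ > 0, let s₀ = σ₀ + iθ₀ with σ₀, θ₀ ∈ ℝ and θ₀ ≠ 0, and suppose the coefficients of Δ satisfy, with D = τ²θ₀² − sin²(τθ₀): a₁ = −2σ₀ − 2θ₀(τθ₀ − sin(τθ₀)cos(τθ₀))/D, a₀ = σ₀² + 2σ₀θ₀(τθ₀ − sin(τθ₀)cos(τθ₀))/D + θ₀²(τ²θ₀² + sin²(τθ₀))/D, α₁ = 2θ₀e^{σ₀τ}(τθ₀cos(τθ₀) − sin(τθ₀))/D, and α₀ = 2θ₀e^{σ₀τ}(σ₀(sin(τθ₀) − τθ₀cos(τθ₀)) − τθ₀²sin(τθ₀))/D. Then the second derivative of Δ at s₀ is nonzero: Δ''(s₀) ≠ 0. -/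

import Mathlib

open Complex

/-- Under the complex double-root coefficient choice, the second derivative
of Δ at s₀ = σ₀ + iθ₀ is nonzero. -/
theorem second_derivative_nonzero
    (τ σ₀ θ₀ a₁ a₀ α₁ α₀ D : ℝ) (hτ : 0 < τ) (hθ₀ : θ₀ ≠ 0)
    (s₀ : ℂ) (hs₀ : s₀ = σ₀ + θ₀ * Complex.I)
    (hD : D = τ ^ 2 * θ₀ ^ 2 - Real.sin (τ * θ₀) ^ 2)
    (ha₁ : a₁ = -2 * σ₀ - 2 * θ₀ * (τ * θ₀ - Real.sin (τ * θ₀) * Real.cos (τ * θ₀)) / D)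
    (ha₀ : a₀ = σ₀ ^ 2 + 2 * σ₀ * θ₀ * (τ * θ₀ - Real.sin (τ * θ₀) * Real.cos (τ * θ₀)) / D
            + θ₀ ^ 2 * (τ ^ 2 * θ₀ ^ 2 + Real.sin (τ * θ₀) ^ 2) / D)
    (hα₁ : α₁ = 2 * θ₀ * Real.exp (σ₀ * τ) *
            (τ * θ₀ * Real.cos (τ * θ₀) - Real.sin (τ * θ₀)) / D)
    (hα₀ : α₀ = 2 * θ₀ * Real.exp (σ₀ * τ) *
            (σ₀ * (Real.sin (τ * θ₀) - τ * θ₀ * Real.cos (τ * θ₀))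
              - τ * θ₀ ^ 2 * Real.sin (τ * θ₀)) / D)
    (Δ : ℂ → ℂ)
    (hΔ : ∀ s : ℂ, Δ s = s ^ 2 + a₁ * s + a₀ + Complex.exp (-s * τ) * (α₁ * s + α₀)) :
    iteratedDeriv 2 Δ s₀ ≠ 0 := by
  have hΔfun : Δ = fun s : ℂ => s ^ 2 + a₁ * s + a₀ + Complex.exp (-s * τ) * (α₁ * s + α₀) :=
    funext hΔ
  -- derivative of exp(-s τ)
  have hexp : ∀ s : ℂ, HasDerivAt (fun s : ℂ => Complex.exp (-s * τ))
      (Complex.exp (-s * τ) * (-τ)) s := fun s => by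
    have h1 : HasDerivAt (fun s : ℂ => -s * τ) (-τ : ℂ) s := by
      simpa using ((hasDerivAt_id s).neg.mul_const (τ : ℂ))
    exact h1.cexp
  -- first derivative
  have h1 : ∀ s : ℂ, HasDerivAt Δ
      (2 * s + a₁ + Complex.exp (-s * τ) * (α₁ - τ * (α₁ * s + α₀))) s := fun s => by
    rw [hΔfun]
    have hp : HasDerivAt (fun s : ℂ => s ^ 2 + a₁ * s + a₀) (2 * s + a₁) s := by
      have := (((hasDerivAt_pow 2 s).add (((hasDerivAt_id s).const_mul (a₁ : ℂ)))).add_const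
        (a₀ : ℂ))
      exact this.congr_deriv (by norm_num)
    have hl : HasDerivAt (fun s : ℂ => (α₁ : ℂ) * s + α₀) (α₁ : ℂ) s := by
      simpa using ((hasDerivAt_id s).const_mul (α₁ : ℂ)).add_const (α₀ : ℂ)
    have := hp.add ((hexp s).mul hl)
    exact this.congr_deriv (by ring)
  have hderiv : deriv Δ = fun s : ℂ =>
      2 * s + a₁ + Complex.exp (-s * τ) * (α₁ - τ * (α₁ * s + α₀)) :=
    funext fun s => (h1 s).deriv
  -- second derivative
  have h2 : HasDerivAt (fun s : ℂ =>
      2 * s + a₁ + Complex.exp (-s * τ) * (α₁ - τ * (α₁ * s + α₀)))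
      (2 + Complex.exp (-s₀ * τ) * (τ ^ 2 * (α₁ * s₀ + α₀) - 2 * τ * α₁)) s₀ := by
    have hp : HasDerivAt (fun s : ℂ => 2 * s + (a₁ : ℂ)) (2 : ℂ) s₀ := by
      simpa using ((hasDerivAt_id s₀).const_mul (2 : ℂ)).add_const (a₁ : ℂ)
    have hl : HasDerivAt (fun s : ℂ => (α₁ : ℂ) - τ * (α₁ * s + α₀)) (-(τ * α₁) : ℂ) s₀ := by
      have : HasDerivAt (fun s : ℂ => (τ : ℂ) * (α₁ * s + α₀)) ((τ : ℂ) * α₁) s₀ :=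
by
          simpa using (((hasDerivAt_id s₀).const_mul (α₁ : ℂ)).add_const (α₀ : ℂ)).const_mul (τ : ℂ)
      simpa using (this.const_sub (α₁ : ℂ))
    have := hp.add ((hexp s₀).mul hl)
    exact this.congr_deriv (by ring)
  have hval : iteratedDeriv 2 Δ s₀
      = 2 + Complex.exp (-s₀ * τ) * (τ ^ 2 * (α₁ * s₀ + α₀) - 2 * τ * α₁) := by
    rw [show (2 : ℕ) = 1 + 1 from rfl, iteratedDeriv_succ, iteratedDeriv_one, hderiv]
    exact h2.deriv
  rw [hval]
  -- now the arithmetic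
  have hφ : τ * θ₀ ≠ 0 := mul_ne_zero (ne_of_gt hτ) hθ₀
  have hDpos : 0 < D := by
    rw [hD]
    have := Real.sin_sq_lt_sq hφ
    nlinarith
  have hepos : 0 < Real.exp (σ₀ * τ) := Real.exp_pos _
  intro hV
  have hre := congrArg Complex.re hV
  have him := congrArg Complex.im hV
  simp only [hs₀, Complex.add_re, Complex.add_im, Complex.mul_re, Complex.mul_im,
    Complex.exp_re, Complex.exp_im, Complex.neg_re, Complex.neg_im, Complex.ofReal_re,
    Complex.ofReal_im, Complex.I_re, Complex.I_im, Complex.sub_re, Complex.sub_im,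
    Complex.one_re, Complex.one_im, Complex.zero_re,
    Complex.zero_im, ← Complex.ofReal_pow] at hre him
  norm_num at hre him
  rw [hα₁, hα₀, Real.exp_neg, mul_comm θ₀ τ] at hre him
  have hsc : Real.sin (τ*θ₀)^2 + Real.cos (τ*θ₀)^2 = 1 := Real.sin_sq_add_cos_sq _
  have hDne : D ≠ 0 := ne_of_gt hDpos
  have hene : Real.exp (σ₀*τ) ≠ 0 := ne_of_gt hepos
  field_simp at hre him
  set e := Real.exp (σ₀ * τ) with he
  set sn := Real.sin (τ * θ₀) with hsn
  set c := Real.cos (τ * θ₀) with hc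
  have h3 : e * (τ * θ₀ * c - sn) ^ 2 = 0 := by
    linear_combination (-(1:ℝ)/2) * e * hre + e * hD - e * τ ^ 2 * θ₀ ^ 2 * hsc
  have h4 : (τ * θ₀ * c - sn) ^ 2 = 0 := by
    rcases mul_eq_zero.mp h3 with h | h
    · exact absurd h hene
    · exact h
  have key : τ * θ₀ * c - sn = 0 := by
    exact pow_eq_zero_iff two_ne_zero |>.mp h4
  have h5 : e * (2 * τ ^ 3 * θ₀ ^ 3 * sn ^ 2) = 0 := by
    linear_combination e * him - (2 * τ ^ 2 * θ₀ ^ 2 * e * c + 4 * τ * θ₀ * e * sn) * key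
  have h6 : 2 * τ ^ 3 * θ₀ ^ 3 * sn ^ 2 = 0 := by
    rcases mul_eq_zero.mp h5 with h | h
    · exact absurd h hene
    · exact h
  have hsn0 : sn = 0 := by
    have hne : 2 * τ ^ 3 * θ₀ ^ 3 ≠ 0 := by positivity
    have : sn ^ 2 = 0 := by
      rcases mul_eq_zero.mp (by linarith [h6] : (2 * τ ^ 3 * θ₀ ^ 3) * sn ^ 2 = 0) with h | h
      · exact absurd h hne
      · exact h
    exact pow_eq_zero_iff two_ne_zero |>.mp this
  have hc0 : c = 0 := by
    have : τ * θ₀ * c = 0 := by rw [hsn0] at key; linarith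
    rcases mul_eq_zero.mp this with h | h
    · exact absurd h hφ
    · exact h
  rw [hsn0, hc0] at hsc
  norm_num at hsc
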